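/- arXiv:2507.09480 — 5 statements merged into one kernel-verified Lean document; each statement's English description precedes it below -/
import Mathlib

section
/- For distinct real numbers x_0, ..., x_N, the (i+1, j+1) entry of the inverse of the Vandermonde matrix W with entries W_{(r+1)(c+1)} = x_r^c is given by (-1)^{N-i} e_{N-i}({x_0,...,x_N} \ {x_j}) divided by the product over m ≠ j of (x_j - x_m), where e_m denotes the m-th elementary symmetric polynomial. -/
open Finset

open Polynomial

/-- The m-th elementary symmetric function of `f` over a finite set `s`. -/
def esymmOn {ι : Type*} [DecidableEq ι] (s : Finset ι) (f : ι → ℝ) (m : ℕ) : ℝ :=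
  ∑ t ∈ s.powersetCard m, ∏ i ∈ t, f i

theorem inverse_vandermonde_entry (N : ℕ) (x : Fin (N + 1) → ℝ)
    (hx : Function.Injective x) (i j : Fin (N + 1)) :
    (Matrix.vandermonde x)⁻¹ i j =
      (-1) ^ (N - (i : ℕ)) * esymmOn (Finset.univ.erase j) x (N - (i : ℕ)) /
        ∏ m ∈ Finset.univ.erase j, (x j - x m) := by
  set M : Matrix (Fin (N+1)) (Fin (N+1)) ℝ := fun c j =>
    (-1) ^ (N - (c : ℕ)) * esymmOn (Finset.univ.erase j) x (N - (c : ℕ)) /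
      ∏ m ∈ Finset.univ.erase j, (x j - x m) with hM
  suffices h : (Matrix.vandermonde x)⁻¹ = M by rw [h]
  apply Matrix.inv_eq_right_inv
  ext r k
  have hcard : (Finset.univ.erase k).card = N := by
    rw [card_erase_of_mem (mem_univ k), card_univ, Fintype.card_fin]; rfl
  set P : ℝ[X] := ∏ m ∈ Finset.univ.erase k, (X - C (x m)) with hP
  have hPc : ∀ c : Fin (N+1), P.coeff c = (-1) ^ (N - (c : ℕ)) * esymmOn (Finset.univ.erase k) x (N - (c : ℕ)) := by
    intro c
    have h1 : P = (((Finset.univ.erase k).val.map x).map fun t => X - C t).prod := by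
      rw [Multiset.map_map]; rfl
    have h2 : Multiset.card ((Finset.univ.erase k).val.map x) = N := by
      rw [Multiset.card_map]; exact hcard
    rw [h1, Multiset.prod_X_sub_C_coeff _ (by rw [h2]; omega), h2,
      Finset.esymm_map_val]
    rfl
  have hdeg : P.natDegree = N := by
    rw [hP, show ∏ m ∈ Finset.univ.erase k, (X - C (x m)) = (((Finset.univ.erase k).val.map x).map fun t => X - C t).prod from by rw [Multiset.map_map]; rfl,
      natDegree_multiset_prod_X_sub_C_eq_card, Multiset.card_map]
    exact hcard
  have hD : (∏ m ∈ Finset.univ.erase k, (x k - x m)) ≠ 0 := by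
    apply prod_ne_zero_iff.mpr
    intro m hm
    exact sub_ne_zero.mpr fun h => (mem_erase.mp hm).1 (hx h.symm)
  have key : ∑ c : Fin (N+1), x r ^ (c : ℕ) * P.coeff c = P.eval (x r) := by
    rw [eval_eq_sum_range' (n := N + 1) (by omega) (x r)]
    rw [Fin.sum_univ_eq_sum_range (fun c => x r ^ c * P.coeff c)]
    exact Finset.sum_congr rfl fun c _ => by ring
  have : (Matrix.vandermonde x * M) r k = P.eval (x r) / (∏ m ∈ Finset.univ.erase k, (x k - x m)) := by
    rw [Matrix.mul_apply]
    rw [← key, Finset.sum_div]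
    apply Finset.sum_congr rfl
    intro c _
    rw [hM, Matrix.vandermonde]
    simp only [Matrix.of_apply]
    rw [hPc c]
    ring
  rw [this]
  by_cases hrk : r = k
  · subst hrk
    rw [Matrix.one_apply_eq]
    rw [hP, eval_prod]
    simp only [eval_sub, eval_X, eval_C]
    exact div_self hD
  · rw [Matrix.one_apply_ne hrk]
    rw [hP, eval_prod]
    rw [Finset.prod_eq_zero (mem_erase.mpr ⟨hrk, mem_univ r⟩) (by simp), zero_div]
end

section
/- If x_0, ..., x_N are real numbers with |x_i - x_j| ≥ h for all i ≠ j and |x_i| ≤ Kh for all i, where h > 0 and K > 0, then every entry of the inverse Vandermonde matrix satisfies |(W^{-1})_{(i+1)(j+1)}| ≤ C(N, N-i) · K^{N-i} · h^{-i}. -/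
open Finset

theorem inverse_vandermonde_entry_bound (N : ℕ) (x : Fin (N + 1) → ℝ) (h K : ℝ)
    (hh : 0 < h) (hK : 0 < K)
    (hsep : ∀ i j, i ≠ j → h ≤ |x i - x j|)
    (hbd : ∀ i, |x i| ≤ K * h) (i j : Fin (N + 1)) :
    |(Matrix.vandermonde x)⁻¹ i j| ≤
      (N.choose (N - (i : ℕ))) * K ^ (N - (i : ℕ)) / h ^ (i : ℕ) := by
  classical
  have hinj : Function.Injective x := by
    intro a b hab
    by_contra hne
    have := hsep a b hne
    rw [hab, sub_self, abs_zero] at this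
    linarith
  have hinjOn : Set.InjOn x (univ : Finset (Fin (N + 1))) := fun a _ b _ hab => hinj hab
  -- The inverse of the Vandermonde matrix is the matrix of Lagrange basis coefficients
  set B : Matrix (Fin (N + 1)) (Fin (N + 1)) ℝ :=
    Matrix.of fun k l => (Lagrange.basis univ x l).coeff k with hB
  have hdeg : ∀ l : Fin (N + 1), (Lagrange.basis univ x l).natDegree = N := by
    intro l
    rw [Lagrange.natDegree_basis hinjOn (mem_univ l), card_univ, Fintype.card_fin]
    rfl
  have hmul : Matrix.vandermonde x * B = 1 := by
    ext r l
    rw [Matrix.mul_apply]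
    have : ∀ k : Fin (N + 1),
        Matrix.vandermonde x r k * B k l = (Lagrange.basis univ x l).coeff k * x r ^ (k : ℕ) := by
      intro k; simp [Matrix.vandermonde_apply, hB, mul_comm]
    rw [Finset.sum_congr rfl fun k _ => this k]
    have := Fin.sum_univ_eq_sum_range
      (fun k => (Lagrange.basis univ x l).coeff k * x r ^ k) (N + 1)
    rw [this, ← Polynomial.eval_eq_sum_range' (by rw [hdeg l]; omega) (x r)]
    by_cases hrl : r = l
    · subst hrl
      rw [Lagrange.eval_basis_self hinjOn (mem_univ r), Matrix.one_apply_eq]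
    · rw [Lagrange.eval_basis_of_ne (Ne.symm hrl) (mem_univ r), Matrix.one_apply_ne hrl]
  have hinv : (Matrix.vandermonde x)⁻¹ = B := Matrix.inv_eq_right_inv hmul
  rw [hinv]
  -- Now bound the coefficient of the Lagrange basis polynomial
  set s : Finset (Fin (N + 1)) := univ.erase j with hs
  have hcards : s.card = N := by
    rw [hs, card_erase_of_mem (mem_univ j), card_univ, Fintype.card_fin]; rfl
  -- decompose basis polynomial
  have hbasis : Lagrange.basis univ x j =
      Polynomial.C (∏ m ∈ s, (x j - x m)⁻¹) * ∏ m ∈ s, (Polynomial.X - Polynomial.C (x m)) := by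
    rw [Lagrange.basis]
    simp_rw [Lagrange.basisDivisor]
    rw [Finset.prod_mul_distrib, ← map_prod]
  have hile : (i : ℕ) ≤ N := by omega
  -- coefficient of the monic product via Vieta
  have hcoeffprod : (∏ m ∈ s, (Polynomial.X - Polynomial.C (x m))).coeff i =
      (-1) ^ (N - (i : ℕ)) * (s.val.map x).esymm (N - (i : ℕ)) := by
    have h1 : ∏ m ∈ s, (Polynomial.X - Polynomial.C (x m)) =
        ((s.val.map x).map fun t => Polynomial.X - Polynomial.C t).prod := by
      rw [Multiset.map_map]
      rfl
    have hcard : Multiset.card (s.val.map x) = N := by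
      rw [Multiset.card_map]; exact hcards
    rw [h1, Multiset.prod_X_sub_C_coeff _ (by rw [hcard]; exact hile), hcard]
  -- bound on esymm
  have hesymm : |(s.val.map x).esymm (N - (i : ℕ))| ≤
      (N.choose (N - (i : ℕ))) * (K * h) ^ (N - (i : ℕ)) := by
    rw [Finset.esymm_map_val]
    calc |∑ t ∈ s.powersetCard (N - (i : ℕ)), ∏ m ∈ t, x m|
        ≤ ∑ t ∈ s.powersetCard (N - (i : ℕ)), |∏ m ∈ t, x m| := Finset.abs_sum_le_sum_abs _ _
      _ ≤ ∑ t ∈ s.powersetCard (N - (i : ℕ)), (K * h) ^ (N - (i : ℕ)) := by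
          refine Finset.sum_le_sum fun t ht => ?_
          have htcard : t.card = N - (i : ℕ) := (Finset.mem_powersetCard.mp ht).2
          rw [Finset.abs_prod, ← htcard, ← Finset.prod_const]
          exact Finset.prod_le_prod (fun m _ => abs_nonneg _) fun m _ => hbd m
      _ = (N.choose (N - (i : ℕ))) * (K * h) ^ (N - (i : ℕ)) := by
          rw [Finset.sum_const, Finset.card_powersetCard, hcards, nsmul_eq_mul]
  -- bound on denominator product
  have hden : |∏ m ∈ s, (x j - x m)⁻¹| ≤ (h ^ N)⁻¹ := by
    rw [Finset.abs_prod, ← inv_pow]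
    have hle : ∏ m ∈ s, |(x j - x m)⁻¹| ≤ ∏ m ∈ s, h⁻¹ := by
      refine Finset.prod_le_prod (fun m _ => abs_nonneg _) fun m hm => ?_
      rw [abs_inv]
      have hmj : m ≠ j := (Finset.mem_erase.mp hm).1
      exact inv_anti₀ hh (hsep j m (Ne.symm hmj))
    calc ∏ m ∈ s, |(x j - x m)⁻¹| ≤ ∏ m ∈ s, h⁻¹ := hle
      _ = h⁻¹ ^ N := by rw [Finset.prod_const, hcards]
  -- put it together
  have hcoeff : |(Lagrange.basis univ x j).coeff i| ≤
      (h ^ N)⁻¹ * ((N.choose (N - (i : ℕ))) * (K * h) ^ (N - (i : ℕ))) := by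
    rw [hbasis, Polynomial.coeff_C_mul, hcoeffprod, abs_mul, abs_mul, abs_pow, abs_neg, abs_one,
      one_pow, one_mul]
    have h1 : (0 : ℝ) ≤ |(s.val.map x).esymm (N - (i : ℕ))| := abs_nonneg _
    have h2 : (0 : ℝ) ≤ |∏ m ∈ s, (x j - x m)⁻¹| := abs_nonneg _
    exact mul_le_mul hden hesymm h1 (by positivity)
  refine le_trans hcoeff (le_of_eq ?_)
  have hNsplit : h ^ N = h ^ (i : ℕ) * h ^ (N - (i : ℕ)) := by
    rw [← pow_add]
    congr 1
    omega
  have hhi : (h : ℝ) ^ (i : ℕ) ≠ 0 := by positivity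
  have hhk : (h : ℝ) ^ (N - (i : ℕ)) ≠ 0 := by positivity
  rw [hNsplit, mul_pow]
  field_simp
end

section
/- Let f be (N+1)-times continuously differentiable on an interval containing 0, with |f^{(N+1)}(ζ)| ≤ M for all |ζ| ≤ Kh. Sample N+1 points x_0,...,x_N with |x_i - x_j| ≥ h for i ≠ j and |x_i| ≤ Kh. Let a_n = f^{(n)}(0)/n!, and define estimates (a_0^e,...,a_N^e) = W^{-1}·(f(x_0),...,f(x_N)) where W is the Vandermonde matrix with rows (1, x_i, ..., x_i^N). Then |a_i^e - a_i| ≤ M·C(N,i)·K^{2N+1-i}·h^{N+1-i}/N! for each i = 0,...,N. -/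
open Finset

section helpers
open Polynomial Set

open Polynomial in
lemma coeff_prod_bound {ι : Type*} (v : ι → ℝ) (B : ℝ) (hB : 0 ≤ B)
    (s : Finset ι) (hv : ∀ k ∈ s, |v k| ≤ B) (i : ℕ) :
    |(∏ k ∈ s, (X - C (v k))).coeff i| ≤ (s.card.choose i) * B ^ (s.card - i) := by
  induction s using Finset.cons_induction generalizing i with
  | empty =>
    cases i <;> simp [Polynomial.coeff_one]
  | cons a s ha ih =>
    have hva : |v a| ≤ B := hv a (Finset.mem_cons_self a s)
    have hv' : ∀ k ∈ s, |v k| ≤ B := fun k hk => hv k (Finset.mem_cons_of_mem hk)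
    rw [Finset.prod_cons, Finset.card_cons]
    set p := ∏ k ∈ s, (X - C (v k)) with hp
    have hco : ∀ j, ((X - C (v a)) * p).coeff j =
        (X * p).coeff j - v a * p.coeff j := by
      intro j; rw [sub_mul, Polynomial.coeff_sub, Polynomial.coeff_C_mul]
    cases i with
    | zero =>
      rw [hco 0]
      have : (X * p).coeff 0 = 0 := by
        rw [Polynomial.mul_coeff_zero, Polynomial.coeff_X_zero, zero_mul]
      rw [this, zero_sub, abs_neg, abs_mul]
      calc |v a| * |p.coeff 0| ≤ B * ((s.card.choose 0) * B ^ (s.card - 0)) :=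
            mul_le_mul hva (ih hv' 0) (abs_nonneg _) hB
        _ = ((s.card + 1).choose 0) * B ^ (s.card + 1 - 0) := by
            simp [pow_succ]; ring
    | succ m =>
      rw [hco (m+1), Polynomial.coeff_X_mul]
      have h1 := ih hv' m
      have h2 := ih hv' (m+1)
      have habs : |p.coeff m - v a * p.coeff (m+1)| ≤
          |p.coeff m| + B * |p.coeff (m+1)| := by
        calc |p.coeff m - v a * p.coeff (m+1)| ≤ |p.coeff m| + |v a * p.coeff (m+1)| :=
              abs_sub _ _
          _ ≤ |p.coeff m| + B * |p.coeff (m+1)| := by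
              rw [abs_mul]
              gcongr
      refine habs.trans ?_
      rcases lt_or_ge m s.card with hm | hm
      · have hsub : s.card - (m+1) + 1 = s.card - m := by omega
        have : B * B ^ (s.card - (m+1)) = B ^ (s.card - m) := by
          rw [← hsub, pow_succ]; ring
        calc |p.coeff m| + B * |p.coeff (m+1)|
            ≤ (s.card.choose m) * B ^ (s.card - m)
              + B * ((s.card.choose (m+1)) * B ^ (s.card - (m+1))) := by gcongr
          _ = ((s.card.choose m) + (s.card.choose (m+1))) * B ^ (s.card - m) := by
              rw [← this]; ring
          _ = ((s.card + 1).choose (m+1)) * B ^ (s.card + 1 - (m+1)) := by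
              have he : s.card + 1 - (m+1) = s.card - m := by omega
              rw [he, Nat.choose_succ_succ]; push_cast; ring
      · have hz : s.card.choose (m+1) = 0 := Nat.choose_eq_zero_of_lt (by omega)
        have hz2 : s.card - m = 0 := by omega
        calc |p.coeff m| + B * |p.coeff (m+1)|
            ≤ (s.card.choose m) * B ^ (s.card - m)
              + B * ((s.card.choose (m+1)) * B ^ (s.card - (m+1))) := by gcongr
          _ = ((s.card + 1).choose (m+1)) * B ^ (s.card + 1 - (m+1)) := by
              have he : s.card + 1 - (m+1) = s.card - m := by omega
              rw [hz, Nat.choose_succ_succ, hz, he]; push_cast; ring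


lemma iterWithin {n : ℕ} {f : ℝ → ℝ} (hf : ContDiff ℝ n f) {s : Set ℝ}
    (hs : UniqueDiffOn ℝ s) {k : ℕ} (hk : k ≤ n) {y : ℝ} (hy : y ∈ s) :
    iteratedDerivWithin k f s y = iteratedDeriv k f y := by
  have H := contDiff_iff_ftaylorSeries.mp hf
  have h1 := (H.hasFTaylorSeriesUpToOn s).eq_iteratedFDerivWithin_of_uniqueDiffOn
    (m := k) (by exact_mod_cast hk) hs hy
  have h2 := H.eq_iteratedFDeriv (m := k) (by exact_mod_cast hk) y
  rw [iteratedDerivWithin_eq_iteratedFDerivWithin, iteratedDeriv_eq_iteratedFDeriv,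
    ← h1, ← h2]

lemma taylor_rem_pos (N : ℕ) (f : ℝ → ℝ) (R M : ℝ) (hM : 0 ≤ M)
    (hf : ContDiff ℝ (N + 1) f)
    (hbound : ∀ ζ : ℝ, |ζ| ≤ R → |iteratedDeriv (N + 1) f ζ| ≤ M)
    (t : ℝ) (htpos : 0 < t) (ht : t ≤ R) :
    |f t - ∑ k ∈ Finset.range (N + 1), iteratedDeriv k f 0 / k.factorial * t ^ k| ≤
      M * R ^ (N + 1) / (N + 1).factorial := by
  have hf1 : ContDiff ℝ ((N+1 : ℕ) : ℕ∞) f := by exact_mod_cast hf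
  have hud : UniqueDiffOn ℝ (Icc (0:ℝ) t) := uniqueDiffOn_Icc htpos
  have hfN : ContDiff ℝ N f := hf.of_le (by exact_mod_cast Nat.le_succ N)
  have hc : ContDiffOn ℝ N f (Icc 0 t) := hfN.contDiffOn
  have hdiff : Differentiable ℝ (iteratedDeriv N f) :=
    hf.differentiable_iteratedDeriv N (by exact_mod_cast Nat.lt_succ_self N)
  have hf' : DifferentiableOn ℝ (iteratedDerivWithin N f (Icc 0 t)) (Ioo 0 t) := by
    refine (hdiff.differentiableOn).congr fun y hy => ?_
    exact iterWithin hfN hud le_rfl (Ioo_subset_Icc_self hy)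
  obtain ⟨x', hx', hEq⟩ := taylor_mean_remainder_lagrange htpos.ne (by rwa [uIcc_of_le htpos.le])
    (by rwa [uIcc_of_le htpos.le, uIoo_of_le htpos.le])
  rw [uIcc_of_le htpos.le] at hEq
  rw [uIoo_of_le htpos.le] at hx'
  have hT : taylorWithinEval f N (Icc 0 t) 0 t =
      ∑ k ∈ Finset.range (N + 1), iteratedDeriv k f 0 / k.factorial * t ^ k := by
    rw [taylor_within_apply]
    refine Finset.sum_congr rfl fun k hk => ?_
    rw [iterWithin hf1 hud (Nat.lt_succ_iff.mp (Finset.mem_range.mp hk) |>.trans (Nat.le_succ N))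
      (left_mem_Icc.mpr htpos.le)]
    rw [smul_eq_mul, sub_zero]; ring
  rw [hT] at hEq
  rw [hEq]
  have hx'R : |x'| ≤ R := by
    rw [abs_of_pos hx'.1]
    exact hx'.2.le.trans ht
  have hD : |iteratedDerivWithin (N+1) f (Icc 0 t) x'| ≤ M := by
    rw [iterWithin hf1 hud le_rfl (Ioo_subset_Icc_self hx')]
    exact hbound x' hx'R
  rw [abs_div, abs_mul, sub_zero, abs_of_nonneg (by positivity : (0:ℝ) ≤ t ^ (N+1)),
    abs_of_nonneg (by positivity : (0:ℝ) ≤ ((N+1).factorial : ℝ))]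
  have htR : t ^ (N + 1) ≤ R ^ (N + 1) := pow_le_pow_left₀ htpos.le ht _
  gcongr

lemma taylor_rem (N : ℕ) (f : ℝ → ℝ) (R M : ℝ) (hR : 0 ≤ R) (hM : 0 ≤ M)
    (hf : ContDiff ℝ (N + 1) f)
    (hbound : ∀ ζ : ℝ, |ζ| ≤ R → |iteratedDeriv (N + 1) f ζ| ≤ M)
    (t : ℝ) (ht : |t| ≤ R) :
    |f t - ∑ k ∈ Finset.range (N + 1), iteratedDeriv k f 0 / k.factorial * t ^ k| ≤
      M * R ^ (N + 1) / (N + 1).factorial := by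
  rcases lt_trichotomy t 0 with hneg | rfl | hpos
  · -- t < 0 : apply positive case to g = f ∘ Neg
    set g : ℝ → ℝ := fun s => f (-s) with hg
    have hgc : ContDiff ℝ (N + 1) g := hf.comp contDiff_neg
    have hgb : ∀ ζ : ℝ, |ζ| ≤ R → |iteratedDeriv (N + 1) g ζ| ≤ M := by
      intro ζ hζ
      rw [hg, iteratedDeriv_comp_neg, smul_eq_mul, abs_mul, abs_pow, abs_neg, abs_one,
        one_pow, one_mul]
      exact hbound (-ζ) (by rwa [abs_neg])
    have key := taylor_rem_pos N g R M hM hgc hgb (-t) (by linarith)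
      (by rw [abs_of_neg hneg] at ht; linarith)
    have hgt : g (-t) = f t := by simp [hg]
    have hsum : ∑ k ∈ Finset.range (N + 1), iteratedDeriv k g 0 / k.factorial * (-t) ^ k
        = ∑ k ∈ Finset.range (N + 1), iteratedDeriv k f 0 / k.factorial * t ^ k := by
      refine Finset.sum_congr rfl fun k _ => ?_
      rw [hg, iteratedDeriv_comp_neg, neg_zero, smul_eq_mul]
      have : ((-1 : ℝ)) ^ k * (-t) ^ k = t ^ k := by
        rw [← mul_pow]; norm_num
      calc (-1 : ℝ) ^ k * iteratedDeriv k f 0 / ↑k.factorial * (-t) ^ k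
          = iteratedDeriv k f 0 / ↑k.factorial * ((-1 : ℝ) ^ k * (-t) ^ k) := by ring
        _ = iteratedDeriv k f 0 / ↑k.factorial * t ^ k := by rw [this]
    rwa [hgt, hsum] at key
  · -- t = 0
    have : f 0 - ∑ k ∈ Finset.range (N + 1),
        iteratedDeriv k f 0 / k.factorial * (0:ℝ) ^ k = 0 := by
      rw [Finset.sum_eq_single 0]
      · simp
      · intro k _ hk
        rw [zero_pow hk, mul_zero]
      · simp
    rw [this, abs_zero]
    positivity
  · exact taylor_rem_pos N f R M hM hf hbound t hpos (by rwa [abs_of_pos hpos] at ht)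

lemma eval_eq_sum_of_degree_lt' {P : Polynomial ℝ} {n : ℕ} (hP : P.degree < n) (t : ℝ) :
    P.eval t = ∑ i ∈ Finset.range n, P.coeff i * t ^ i := by
  rcases eq_or_ne P 0 with rfl | hne
  · simp
  · exact Polynomial.eval_eq_sum_range' ((Polynomial.natDegree_lt_iff_degree_lt hne).mpr hP) t

lemma mulVec_solution (N : ℕ) (x : Fin (N+1) → ℝ) (hinj : Function.Injective x)
    (y : Fin (N+1) → ℝ) :
    (Matrix.vandermonde x).mulVec
      (fun j => (Lagrange.interpolate Finset.univ x y).coeff j) = y := by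
  funext j
  have hdeg : (Lagrange.interpolate Finset.univ x y).degree < ((N+1 : ℕ) : WithBot ℕ) := by
    have := Lagrange.degree_interpolate_lt (s := Finset.univ) (v := x) (r := y) hinj.injOn
    simpa using this
  have hev := Lagrange.eval_interpolate_at_node (r := y) hinj.injOn (Finset.mem_univ j)
  simp only [Matrix.mulVec, dotProduct, Matrix.vandermonde]
  rw [← hev, eval_eq_sum_of_degree_lt' hdeg,
    ← Fin.sum_univ_eq_sum_range
      (fun k => (Lagrange.interpolate Finset.univ x y).coeff k * x j ^ k)]
  exact Finset.sum_congr rfl fun n _ => by simp [Matrix.of_apply]; ring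

lemma vandermonde_cancel (N : ℕ) (x : Fin (N+1) → ℝ) (hinj : Function.Injective x)
    (v : Fin (N+1) → ℝ) :
    (Matrix.vandermonde x)⁻¹.mulVec ((Matrix.vandermonde x).mulVec v) = v := by
  have hdet : IsUnit (Matrix.vandermonde x).det := by
    rw [isUnit_iff_ne_zero, Matrix.det_vandermonde_ne_zero_iff]; exact hinj
  rw [Matrix.mulVec_mulVec, Matrix.nonsing_inv_mul _ hdet, Matrix.one_mulVec]

lemma basis_coeff_bound (N : ℕ) (x : Fin (N+1) → ℝ) (h K : ℝ) (hh : 0 < h) (hK : 0 < K)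
    (hsep : ∀ i j, i ≠ j → h ≤ |x i - x j|) (hbd : ∀ i, |x i| ≤ K * h)
    (j : Fin (N+1)) (i : ℕ) :
    |(Lagrange.basis Finset.univ x j).coeff i| ≤
      (h⁻¹) ^ N * ((N.choose i) * (K * h) ^ (N - i)) := by
  have hcard : (Finset.univ.erase j).card = N := by
    rw [Finset.card_erase_of_mem (Finset.mem_univ j), Finset.card_univ, Fintype.card_fin]
    rfl
  have hbasis : Lagrange.basis Finset.univ x j =
      C (∏ k ∈ Finset.univ.erase j, (x j - x k)⁻¹) *
        ∏ k ∈ Finset.univ.erase j, (X - C (x k)) := by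
    rw [Lagrange.basis]
    simp_rw [Lagrange.basisDivisor]
    rw [Finset.prod_mul_distrib, map_prod]
  rw [hbasis, Polynomial.coeff_C_mul, abs_mul]
  have h1 : |∏ k ∈ Finset.univ.erase j, (x j - x k)⁻¹| ≤ (h⁻¹) ^ N := by
    rw [abs_prod]
    calc ∏ k ∈ Finset.univ.erase j, |(x j - x k)⁻¹|
        ≤ ∏ _k ∈ Finset.univ.erase j, h⁻¹ := by
          refine Finset.prod_le_prod (fun k _ => abs_nonneg _) fun k hk => ?_
          rw [abs_inv]
          have hne : j ≠ k := fun hjk => (Finset.mem_erase.mp hk).1 hjk.symm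
          exact inv_anti₀ hh (hsep j k hne)
      _ = (h⁻¹) ^ N := by rw [Finset.prod_const, hcard]
  have h2 : |(∏ k ∈ Finset.univ.erase j, (X - C (x k))).coeff i| ≤
      (N.choose i) * (K * h) ^ (N - i) := by
    have := coeff_prod_bound x (K * h) (by positivity) (Finset.univ.erase j)
      (fun k _ => hbd k) i
    rwa [hcard] at this
  exact mul_le_mul h1 h2 (abs_nonneg _) (by positivity)

end helpers

open Polynomial in

theorem taylor_coefficient_estimate_error (N : ℕ) (f : ℝ → ℝ) (h K M : ℝ)
    (hh : 0 < h) (hK : 0 < K) (hM : 0 < M)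
    (hf : ContDiff ℝ (N + 1) f)
    (hbound : ∀ ζ : ℝ, |ζ| ≤ K * h → |iteratedDeriv (N + 1) f ζ| ≤ M)
    (x : Fin (N + 1) → ℝ)
    (hsep : ∀ i j, i ≠ j → h ≤ |x i - x j|)
    (hbd : ∀ i, |x i| ≤ K * h)
    (a ae : Fin (N + 1) → ℝ)
    (ha : ∀ n : Fin (N + 1), a n = iteratedDeriv (n : ℕ) f 0 / (n : ℕ).factorial)
    (hae : ae = (Matrix.vandermonde x)⁻¹.mulVec (fun j => f (x j))) :
    ∀ i : Fin (N + 1),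
      |ae i - a i| ≤
        M * (N.choose (i : ℕ)) * K ^ (2 * N + 1 - (i : ℕ)) * h ^ (N + 1 - (i : ℕ)) /
          N.factorial := by
  intro i
  have hinj : Function.Injective x := by
    intro p q hpq
    by_contra hne
    have := hsep p q hne
    rw [hpq, sub_self, abs_zero] at this
    linarith
  set y : Fin (N+1) → ℝ := fun j => f (x j) with hy
  set p : Fin (N+1) → ℝ :=
    fun j => ∑ k ∈ Finset.range (N+1), iteratedDeriv k f 0 / k.factorial * x j ^ k with hp
  have hWa : (Matrix.vandermonde x).mulVec a = p := by
    funext j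
    simp only [Matrix.mulVec, dotProduct, Matrix.vandermonde, hp, Matrix.of_apply]
    rw [← Fin.sum_univ_eq_sum_range (fun k => iteratedDeriv k f 0 / k.factorial * x j ^ k)]
    exact Finset.sum_congr rfl fun n _ => by rw [ha n]; ring
  have ha' : a = fun i : Fin (N+1) => (Lagrange.interpolate Finset.univ x p).coeff i := by
    have h1 := vandermonde_cancel N x hinj a
    rw [hWa] at h1
    rw [← h1]
    conv_lhs => rw [← mulVec_solution N x hinj p]
    exact vandermonde_cancel N x hinj _
  have hae' : ae = fun i : Fin (N+1) => (Lagrange.interpolate Finset.univ x y).coeff i := by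
    rw [hae]
    conv_lhs => rw [← mulVec_solution N x hinj y]
    exact vandermonde_cancel N x hinj _
  have hdiff : ae i - a i = (Lagrange.interpolate Finset.univ x (y - p)).coeff i := by
    rw [ha', hae', map_sub, Polynomial.coeff_sub]
  rw [hdiff, Lagrange.interpolate_apply, Polynomial.finset_sum_coeff]
  set Mr : ℝ := M * (K * h) ^ (N + 1) / (N + 1).factorial with hMr
  set Bc : ℝ := (h⁻¹) ^ N * ((N.choose (i : ℕ)) * (K * h) ^ (N - (i : ℕ))) with hBc
  have hterm : ∀ j ∈ (Finset.univ : Finset (Fin (N+1))),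
      |(C ((y - p) j) * Lagrange.basis Finset.univ x j).coeff i| ≤ Mr * Bc := by
    intro j _
    rw [Polynomial.coeff_C_mul, abs_mul]
    have hg : |(y - p) j| ≤ Mr := by
      simp only [Pi.sub_apply, hy, hp]
      exact taylor_rem N f (K * h) M (by positivity) hM.le hf hbound (x j) (hbd j)
    exact mul_le_mul hg (basis_coeff_bound N x h K hh hK hsep hbd j i) (abs_nonneg _)
      (by rw [hMr]; positivity)
  calc |∑ j : Fin (N+1), (C ((y - p) j) * Lagrange.basis Finset.univ x j).coeff i|
      ≤ ∑ j : Fin (N+1), |(C ((y - p) j) * Lagrange.basis Finset.univ x j).coeff i| :=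
        Finset.abs_sum_le_sum_abs _ _
    _ ≤ ∑ _j : Fin (N+1), Mr * Bc := Finset.sum_le_sum hterm
    _ = (N + 1) * (Mr * Bc) := by
        rw [Finset.sum_const, Finset.card_univ, Fintype.card_fin, nsmul_eq_mul]
        push_cast; ring
    _ = M * (N.choose (i : ℕ)) * K ^ (2 * N + 1 - (i : ℕ)) * h ^ (N + 1 - (i : ℕ)) /
          N.factorial := by
        obtain ⟨m, hm⟩ : ∃ m, N = (i : ℕ) + m := ⟨N - i, by omega⟩
        have e1 : N - (i : ℕ) = m := by omega
        have e2 : 2 * N + 1 - (i : ℕ) = N + 1 + m := by omega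
        have e3 : N + 1 - (i : ℕ) = m + 1 := by omega
        rw [hMr, hBc, e1, e2, e3]
        have hfact : ((N + 1).factorial : ℝ) = (N + 1) * N.factorial := by
          rw [Nat.factorial_succ]; push_cast; ring
        rw [hfact, mul_pow, mul_pow, inv_pow, pow_add, pow_add]
        have hfN : (N.factorial : ℝ) ≠ 0 := Nat.cast_ne_zero.mpr N.factorial_ne_zero
        have hN1 : ((N : ℝ) + 1) ≠ 0 := by positivity
        field_simp
        ring
end

section
/- Under the hypotheses of the Vandermonde coefficient estimation theorem (pairwise separation h, sample points within Kh of 0, |f^{(N+1)}| ≤ M near 0), the estimated derivative f^{(i)}(0)^e := i!·a_i^e satisfies |f^{(i)}(0)^e - f^{(i)}(0)| ≤ M·K^{2N+1-i}·h^{N+1-i}/(N-i)! for each 0 ≤ i ≤ N. -/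
open Finset Polynomial Set


lemma my_idw (f : ℝ → ℝ) {n m : ℕ} (hf : ContDiff ℝ (n:ℕ∞) f) (hm : m ≤ n) {s : Set ℝ}
    (hs : UniqueDiffOn ℝ s) {y : ℝ} (hy : y ∈ s) :
    iteratedDerivWithin m f s y = iteratedDeriv m f y := by
  have h1 : HasFTaylorSeriesUpToOn (n:ℕ∞) f (ftaylorSeries ℝ f) s :=
    (contDiff_iff_ftaylorSeries.mp hf).hasFTaylorSeriesUpToOn s
  have h2 := h1.eq_iteratedFDerivWithin_of_uniqueDiffOn (m := m) (by exact_mod_cast hm) hs hy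
  rw [iteratedDerivWithin_eq_iteratedFDerivWithin, iteratedDeriv_eq_iteratedFDeriv, ← h2]
  rfl

lemma my_taylor_pos (f : ℝ → ℝ) (n : ℕ) (M R : ℝ) (hf : ContDiff ℝ ((n:ℕ∞)+1) f)
    (hbound : ∀ ζ : ℝ, |ζ| ≤ R → |iteratedDeriv (n+1) f ζ| ≤ M)
    {y : ℝ} (hy0 : 0 < y) (hyR : y ≤ R) :
    |f y - ∑ k ∈ Finset.range (n+1), iteratedDeriv k f 0 / k.factorial * y ^ k| ≤
      M * R ^ (n+1) / (n+1).factorial := by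
  have hfn1 : ContDiff ℝ ((n+1 : ℕ) : ℕ∞) f := by exact_mod_cast hf
  have hud : UniqueDiffOn ℝ (Icc (0:ℝ) y) := uniqueDiffOn_Icc hy0
  have hcont : ContDiffOn ℝ n f (Icc 0 y) :=
    (hf.of_le (by exact_mod_cast Nat.le_succ n)).contDiffOn
  have hglob : Differentiable ℝ (iteratedDeriv n f) :=
    hf.differentiable_iteratedDeriv n (by exact_mod_cast Nat.lt_succ_self n)
  have hdiff : DifferentiableOn ℝ (iteratedDerivWithin n f (Icc 0 y)) (Ioo 0 y) := by
    refine (hglob.differentiableOn).congr ?_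
    intro z hz
    exact my_idw f hfn1 (Nat.le_succ n) hud (Ioo_subset_Icc_self hz)
  obtain ⟨x', hx', heq⟩ := taylor_mean_remainder_lagrange hy0.ne
    (by rwa [uIcc_of_le hy0.le]) (by rwa [uIcc_of_le hy0.le, uIoo_of_le hy0.le])
  rw [uIoo_of_le hy0.le] at hx'
  rw [uIcc_of_le hy0.le] at heq
  have hT : taylorWithinEval f n (Icc 0 y) 0 y =
      ∑ k ∈ Finset.range (n+1), iteratedDeriv k f 0 / k.factorial * y ^ k := by
    rw [taylor_within_apply]
    refine Finset.sum_congr rfl fun k hk => ?_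
    rw [my_idw f hfn1 (by simp at hk; omega) hud (left_mem_Icc.mpr hy0.le)]
    simp [smul_eq_mul]
    ring
  rw [hT] at heq
  rw [heq]
  rw [my_idw f hfn1 le_rfl hud (Ioo_subset_Icc_self hx')]
  rw [abs_div, abs_mul]
  have hx'R : |x'| ≤ R := by
    rw [abs_of_pos hx'.1]; linarith [hx'.2]
  have h1 : |iteratedDeriv (n+1) f x'| ≤ M := hbound x' hx'R
  have h2 : |(y - 0) ^ (n+1)| ≤ R ^ (n+1) := by
    rw [sub_zero, abs_pow, abs_of_pos hy0]
    exact pow_le_pow_left₀ hy0.le hyR _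
  have hM0 : 0 ≤ M := le_trans (abs_nonneg _) h1
  rw [abs_of_pos (by positivity : (0:ℝ) < ((n+1).factorial : ℝ))]
  gcongr

lemma my_taylor_bound (f : ℝ → ℝ) (n : ℕ) (M R : ℝ) (hf : ContDiff ℝ ((n:ℕ∞)+1) f)
    (hM : 0 ≤ M) (hR : 0 ≤ R)
    (hbound : ∀ ζ : ℝ, |ζ| ≤ R → |iteratedDeriv (n+1) f ζ| ≤ M)
    {y : ℝ} (hy : |y| ≤ R) :
    |f y - ∑ k ∈ Finset.range (n+1), iteratedDeriv k f 0 / k.factorial * y ^ k| ≤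
      M * R ^ (n+1) / (n+1).factorial := by
  rcases lt_trichotomy y 0 with hneg | rfl | hpos
  · -- reflection
    set g : ℝ → ℝ := fun t => f (-t) with hg
    have hgC : ContDiff ℝ ((n:ℕ∞)+1) g := hf.comp contDiff_neg
    have hgb : ∀ ζ : ℝ, |ζ| ≤ R → |iteratedDeriv (n+1) g ζ| ≤ M := by
      intro ζ hζ
      rw [hg, iteratedDeriv_comp_neg]
      rw [smul_eq_mul, abs_mul, abs_pow, abs_neg, abs_one, one_pow, one_mul]
      exact hbound (-ζ) (by rwa [abs_neg])
    have h1 := my_taylor_pos g n M R hgC hgb (y := -y) (by linarith) (by rw [abs_of_nonpos hneg.le] at hy; linarith)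
    have h2 : g (-y) = f y := by simp [hg]
    have h3 : ∀ k, iteratedDeriv k g 0 / k.factorial * (-y) ^ k
        = iteratedDeriv k f 0 / k.factorial * y ^ k := by
      intro k
      rw [hg, iteratedDeriv_comp_neg, neg_zero, smul_eq_mul, neg_pow y]
      have : ((-1:ℝ)^k) * ((-1:ℝ)^k) = 1 := by
        rw [← pow_add]
        exact Even.neg_one_pow ⟨k, rfl⟩
      linear_combination (iteratedDeriv k f 0 / (k.factorial:ℝ) * y ^ k) * this
    rw [h2] at h1
    simpa only [h3] using h1
  · -- y = 0
    have : ∑ k ∈ Finset.range (n+1), iteratedDeriv k f 0 / k.factorial * (0:ℝ) ^ k = f 0 := by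
      rw [Finset.sum_eq_single 0]
      · simp
      · intro k _ hk
        simp [zero_pow hk]
      · simp
    rw [this, sub_self, abs_zero]
    positivity
  · exact my_taylor_pos f n M R hf hbound hpos (by rwa [abs_of_pos hpos] at hy)

lemma my_coeff_bound {ι : Type*} [DecidableEq ι] (v : ι → ℝ) (B : ℝ) (hB : 0 ≤ B) :
    ∀ (s : Finset ι), (∀ k ∈ s, |v k| ≤ B) →
      ∀ i, |(∏ k ∈ s, (X - C (v k))).coeff i| ≤ (s.card.choose i) * B ^ (s.card - i) := by
  intro s
  induction s using Finset.cons_induction_on with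
  | empty =>
    intro _ i
    simp only [Finset.prod_empty, Finset.card_empty, Polynomial.coeff_one]
    rcases Nat.eq_zero_or_pos i with rfl | hi
    · simp
    · rw [if_neg (by omega), Nat.choose_eq_zero_of_lt (by omega)]
      simp
  | @cons a t ha ih =>
    intro hv i
    have hva : |v a| ≤ B := hv a (mem_cons_self a t)
    have ih' := ih (fun k hk => hv k (mem_cons_of_mem hk))
    rw [prod_cons, mul_comm, card_cons]
    set p := ∏ k ∈ t, (X - C (v k)) with hp
    set n := t.card with hn
    rcases Nat.eq_zero_or_pos i with rfl | hi
    · rw [mul_coeff_zero]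
      have : (X - C (v a)).coeff 0 = -(v a) := by simp
      rw [this]
      have h1 : |p.coeff 0 * -(v a)| ≤ (n.choose 0 * B ^ n) * B := by
        rw [abs_mul, abs_neg]
        exact mul_le_mul (ih' 0) hva (abs_nonneg _)
          (by positivity)
      refine h1.trans (le_of_eq ?_)
      simp [pow_succ]
    · obtain ⟨j, rfl⟩ := Nat.exists_eq_add_of_le hi
      rw [add_comm 1 j]
      rw [coeff_mul_X_sub_C, mul_comm (p.coeff (j+1)) (v a)]
      have tri : |p.coeff j - v a * p.coeff (j+1)| ≤ |p.coeff j| + |v a| * |p.coeff (j+1)| := by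
        refine (abs_sub _ _).trans ?_
        rw [abs_mul]
      have h2 : |v a| * |p.coeff (j+1)| ≤ n.choose (j+1) * B ^ (n - j) := by
        rcases le_or_gt (j+1) n with hle | hlt
        · have : B * (n.choose (j+1) * B ^ (n - (j+1))) = n.choose (j+1) * B ^ (n - j) := by
            rw [mul_comm B, mul_assoc, ← pow_succ]
            congr 2
            omega
          calc |v a| * |p.coeff (j+1)| ≤ B * (n.choose (j+1) * B ^ (n - (j+1))) :=
                mul_le_mul hva (ih' (j+1)) (abs_nonneg _) hB
            _ = _ := this
        · rw [Nat.choose_eq_zero_of_lt hlt]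
          have : p.coeff (j+1) = 0 := by
            refine coeff_eq_zero_of_natDegree_lt ?_
            have := natDegree_prod_of_monic t (fun k => X - C (v k))
              (fun k _ => monic_X_sub_C (v k))
            rw [← hp] at this
            simp only [natDegree_X_sub_C, Finset.sum_const, smul_eq_mul, mul_one] at this
            omega
          simp [this]
      calc |p.coeff j - v a * p.coeff (j+1)| ≤ |p.coeff j| + |v a| * |p.coeff (j+1)| := tri
        _ ≤ n.choose j * B ^ (n - j) + n.choose (j+1) * B ^ (n - j) := add_le_add (ih' j) h2
        _ = (n+1).choose (j+1) * B ^ (n + 1 - (j+1)) := by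
            rw [Nat.choose_succ_succ, Nat.cast_add]
            have : n + 1 - (j + 1) = n - j := by omega
            rw [this]
            ring

lemma my_arith (n c : ℕ) (hc : c ≤ n) (M K h : ℝ) (hh : h ≠ 0) :
    (c.factorial : ℝ) * ((n+1) * ((M * (K*h) ^ (n+1) / (n+1).factorial) *
        ((h⁻¹) ^ n * ((n.choose c) * (K*h) ^ (n - c))))) =
      M * K ^ (2*n+1-c) * h ^ (n+1-c) / (n-c).factorial := by
  obtain ⟨d, rfl⟩ : ∃ d, n = c + d := ⟨n - c, by omega⟩
  rw [show 2*(c+d)+1-c = ((c+d)+1)+d from by omega,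
      show (c+d)+1-c = d+1 from by omega,
      show (c+d)-c = d from by omega,
      Nat.cast_choose ℝ (Nat.le_add_right c d)]
  simp only [Nat.add_sub_cancel_left]
  rw [Nat.factorial_succ (c+d)]
  have h1 : (c.factorial : ℝ) ≠ 0 := Nat.cast_ne_zero.mpr c.factorial_ne_zero
  have h2 : (d.factorial : ℝ) ≠ 0 := Nat.cast_ne_zero.mpr d.factorial_ne_zero
  have h3 : ((c+d).factorial : ℝ) ≠ 0 := Nat.cast_ne_zero.mpr (c+d).factorial_ne_zero
  push_cast
  field_simp
  rw [one_div, inv_pow]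
  field_simp
  ring

open Finset

theorem derivative_estimate_error_at_zero (N : ℕ) (f : ℝ → ℝ) (h K M : ℝ)
    (hh : 0 < h) (hK : 0 < K) (hM : 0 < M)
    (hf : ContDiff ℝ (N + 1) f)
    (hbound : ∀ ζ : ℝ, |ζ| ≤ K * h → |iteratedDeriv (N + 1) f ζ| ≤ M)
    (x : Fin (N + 1) → ℝ)
    (hsep : ∀ i j, i ≠ j → h ≤ |x i - x j|)
    (hbd : ∀ i, |x i| ≤ K * h)
    (ae : Fin (N + 1) → ℝ)
    (hae : ae = (Matrix.vandermonde x)⁻¹.mulVec (fun j => f (x j))) :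
    ∀ i : Fin (N + 1),
      |(i : ℕ).factorial * ae i - iteratedDeriv (i : ℕ) f 0| ≤
        M * K ^ (2 * N + 1 - (i : ℕ)) * h ^ (N + 1 - (i : ℕ)) /
          (N - (i : ℕ)).factorial := by
  intro i
  have hKh : 0 < K * h := mul_pos hK hh
  have hinj : Function.Injective x := by
    intro a b hab
    by_contra hne
    have := hsep a b hne
    rw [hab, sub_self, abs_zero] at this; linarith
  have hinjOn : Set.InjOn x ↑(univ : Finset (Fin (N+1))) := fun a _ b _ hab => hinj hab
  have hf' : ContDiff ℝ ((N:ℕ∞)+1) f := by exact_mod_cast hf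
  -- Taylor polynomial
  set T : Polynomial ℝ :=
    ∑ k : Fin (N+1), C (iteratedDeriv (k:ℕ) f 0 / (k:ℕ).factorial) * X ^ (k:ℕ) with hT
  have hTdeg : T.degree < ((N+1 : ℕ) : WithBot ℕ) := degree_sum_fin_lt _
  have hTcoeff : ∀ m : ℕ, m ≤ N → T.coeff m = iteratedDeriv m f 0 / m.factorial := by
    intro m hm
    rw [hT, finset_sum_coeff]
    rw [Finset.sum_eq_single (⟨m, by omega⟩ : Fin (N+1))]
    · simp
    · intro b _ hb
      have hbm : (b : ℕ) ≠ m := by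
        intro hc
        exact hb (Fin.ext (by simp [hc]))
      rw [coeff_C_mul, coeff_X_pow, if_neg (fun hc => hbm hc.symm), mul_zero]
    · intro hc
      exact absurd (Finset.mem_univ _) hc
  have hTeval : ∀ y : ℝ,
      T.eval y = ∑ k ∈ Finset.range (N+1), iteratedDeriv k f 0 / k.factorial * y ^ k := by
    intro y
    rw [hT, eval_finset_sum]
    simp only [eval_mul, eval_C, eval_pow, eval_X]
    exact Fin.sum_univ_eq_sum_range (fun k => iteratedDeriv k f 0 / k.factorial * y ^ k) (N+1)
  -- interpolating polynomial
  set p : Polynomial ℝ := Lagrange.interpolate univ x (fun j => f (x j)) with hp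
  have hpdeg : p.natDegree < N + 1 := by
    have hdeg := Lagrange.degree_interpolate_lt (fun j => f (x j)) hinjOn
    rw [Finset.card_univ, Fintype.card_fin] at hdeg
    rcases eq_or_ne p 0 with h0 | h0
    · rw [h0]; simp
    · exact (Polynomial.natDegree_lt_iff_degree_lt h0).mpr (by exact_mod_cast hdeg)
  have hWc : (Matrix.vandermonde x).mulVec (fun k => p.coeff (k:ℕ)) = fun j => f (x j) := by
    funext j
    have hev : p.eval (x j) = f (x j) :=
      Lagrange.eval_interpolate_at_node (fun j => f (x j)) hinjOn (Finset.mem_univ j)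
    rw [← hev, Polynomial.eval_eq_sum_range' hpdeg]
    simp only [Matrix.mulVec, dotProduct, Matrix.vandermonde_apply]
    rw [← Fin.sum_univ_eq_sum_range (fun k => p.coeff k * x j ^ k) (N+1)]
    exact Finset.sum_congr rfl fun k _ => mul_comm _ _
  have hdet : (Matrix.vandermonde x).det ≠ 0 := Matrix.det_vandermonde_ne_zero_iff.mpr hinj
  have hae' : ae = fun k : Fin (N+1) => p.coeff (k:ℕ) := by
    rw [hae, ← hWc, Matrix.mulVec_mulVec, Matrix.nonsing_inv_mul _ (isUnit_iff_ne_zero.mpr hdet), Matrix.one_mulVec]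
  -- T equals the interpolation of its own values
  have hTi : T = Lagrange.interpolate univ x (fun j => T.eval (x j)) := by
    refine Lagrange.eq_interpolate hinjOn ?_
    rw [Finset.card_univ, Fintype.card_fin]
    exact_mod_cast hTdeg
  -- coefficient difference
  have hdiffc : ae i - T.coeff (i:ℕ) =
      ∑ j : Fin (N+1), (f (x j) - T.eval (x j)) * (Lagrange.basis univ x j).coeff (i:ℕ) := by
    rw [hae']
    have hsub : p - Lagrange.interpolate univ x (fun j => T.eval (x j)) =
        Lagrange.interpolate univ x (fun j => f (x j) - T.eval (x j)) := by
      rw [hp, ← map_sub]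
      rfl
    calc p.coeff (i:ℕ) - T.coeff (i:ℕ)
        = (p - Lagrange.interpolate univ x (fun j => T.eval (x j))).coeff (i:ℕ) := by
          rw [Polynomial.coeff_sub, ← hTi]
      _ = (Lagrange.interpolate univ x (fun j => f (x j) - T.eval (x j))).coeff (i:ℕ) := by
          rw [hsub]
      _ = ∑ j : Fin (N+1), (f (x j) - T.eval (x j)) * (Lagrange.basis univ x j).coeff (i:ℕ) := by
          rw [Lagrange.interpolate_apply, finset_sum_coeff]
          exact Finset.sum_congr rfl fun j _ => coeff_C_mul _
  -- bound on basis coefficients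
  have hbasis : ∀ j : Fin (N+1), |(Lagrange.basis univ x j).coeff (i:ℕ)| ≤
      (h⁻¹) ^ N * ((N.choose i) * (K*h) ^ (N - (i:ℕ))) := by
    intro j
    have hmem : j ∈ (univ : Finset (Fin (N+1))) := Finset.mem_univ j
    have hcard : (univ.erase j).card = N := by
      rw [Finset.card_erase_of_mem hmem, Finset.card_univ, Fintype.card_fin]
      omega
    rw [Lagrange.basis]
    simp_rw [Lagrange.basisDivisor]
    rw [Finset.prod_mul_distrib, ← map_prod, coeff_C_mul, abs_mul]
    have h1 : |∏ k ∈ univ.erase j, (x j - x k)⁻¹| ≤ (h⁻¹) ^ N := by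
      rw [abs_prod]
      have : ∀ k ∈ univ.erase j, |(x j - x k)⁻¹| ≤ h⁻¹ := by
        intro k hk
        rw [abs_inv]
        exact inv_anti₀ hh (hsep j k (Finset.ne_of_mem_erase hk).symm)
      calc ∏ k ∈ univ.erase j, |(x j - x k)⁻¹| ≤ ∏ _k ∈ univ.erase j, h⁻¹ :=
            Finset.prod_le_prod (fun k _ => abs_nonneg _) this
        _ = (h⁻¹) ^ N := by rw [Finset.prod_const, hcard]
    have h2 := my_coeff_bound x (K*h) hKh.le (univ.erase j) (fun k _ => hbd k) (i:ℕ)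
    rw [hcard] at h2
    exact mul_le_mul h1 h2 (abs_nonneg _) (by positivity)
  -- remainder bound
  have hrem : ∀ j : Fin (N+1), |f (x j) - T.eval (x j)| ≤
      M * (K*h) ^ (N+1) / (N+1).factorial := by
    intro j
    rw [hTeval]
    exact my_taylor_bound f N M (K*h) hf' hM.le hKh.le hbound (hbd j)
  -- sum bound
  set B1 : ℝ := M * (K*h) ^ (N+1) / (N+1).factorial with hB1
  set B2 : ℝ := (h⁻¹) ^ N * ((N.choose i) * (K*h) ^ (N - (i:ℕ))) with hB2
  have hB2nn : 0 ≤ B2 := by positivity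
  have hsum : |ae i - T.coeff (i:ℕ)| ≤ (N+1) * (B1 * B2) := by
    rw [hdiffc]
    refine (Finset.abs_sum_le_sum_abs _ _).trans ?_
    have : ∀ j ∈ (univ : Finset (Fin (N+1))),
        |(f (x j) - T.eval (x j)) * (Lagrange.basis univ x j).coeff (i:ℕ)| ≤ B1 * B2 := by
      intro j _
      rw [abs_mul]
      exact mul_le_mul (hrem j) (hbasis j) (abs_nonneg _)
        (le_trans (abs_nonneg _) (hrem j))
    refine (Finset.sum_le_sum this).trans ?_
    rw [Finset.sum_const, Finset.card_univ, Fintype.card_fin, nsmul_eq_mul]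
    push_cast
    exact le_rfl
  -- final assembly
  have hiN : (i:ℕ) ≤ N := by omega
  have hco : T.coeff (i:ℕ) = iteratedDeriv (i:ℕ) f 0 / (i:ℕ).factorial := hTcoeff _ hiN
  have hfacpos : (0:ℝ) < (i:ℕ).factorial := by
    exact_mod_cast Nat.factorial_pos (i:ℕ)
  have heq : ((i:ℕ).factorial : ℝ) * ae i - iteratedDeriv (i:ℕ) f 0 =
      (i:ℕ).factorial * (ae i - T.coeff (i:ℕ)) := by
    rw [hco]; field_simp
  rw [heq, abs_mul, Nat.abs_cast]
  refine le_trans (mul_le_mul_of_nonneg_left hsum (le_of_lt hfacpos)) (le_of_eq ?_)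
  rw [hB1, hB2]
  exact my_arith N (i:ℕ) hiN M K h hh.ne'
end

section
/- Under the hypotheses of the derivative error theorem at a general point x_0 (offsets h_i = x_i - x_0 with |x_i - x_j| ≥ h, |h_i| ≤ Kh, and |f^{(N+1)}| ≤ M on [x_0 - Kh, x_0 + Kh]), the estimated derivatives f^{(i)}(x_0)^e := i!·a_i^e satisfy |f^{(i)}(x_0)^e - f^{(i)}(x_0)| ≤ M·K^{2N+1-i}·h^{N+1-i}/(N-i)! for all 0 ≤ i ≤ N. -/
open Finset

lemma myIterDW {n m : ℕ} (hmn : m ≤ n) {f : ℝ → ℝ} {s : Set ℝ} (hs : UniqueDiffOn ℝ s)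
    (hf : ContDiff ℝ n f) {x : ℝ} (hx : x ∈ s) :
    iteratedDerivWithin m f s x = iteratedDeriv m f x := by
  have h := (contDiff_iff_ftaylorSeries.mp hf).hasFTaylorSeriesUpToOn s
  have h2 := h.eq_iteratedFDerivWithin_of_uniqueDiffOn (by exact_mod_cast hmn) hs hx
  rw [iteratedDerivWithin_eq_iteratedFDerivWithin, iteratedDeriv_eq_iteratedFDeriv, ← h2]
  rfl

lemma taylor_right (n : ℕ) (f : ℝ → ℝ) (x₀ M y : ℝ) (hy : 0 < y)
    (hf : ContDiff ℝ (n+1) f)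
    (hb : ∀ ζ ∈ Set.Icc x₀ (x₀+y), |iteratedDeriv (n+1) f ζ| ≤ M) :
    |f (x₀+y) - ∑ k ∈ Finset.range (n+1), iteratedDeriv k f x₀ / (k.factorial : ℝ) * y^k|
      ≤ M * y^(n+1) / (n+1).factorial := by
  set x := x₀ + y with hxdef
  have hx : x₀ < x := by simp [hxdef]; linarith
  have hud : UniqueDiffOn ℝ (Set.Icc x₀ x) := uniqueDiffOn_Icc hx
  have hfo : ContDiffOn ℝ n f (Set.Icc x₀ x) := (hf.of_le (by exact_mod_cast Nat.le_succ n)).contDiffOn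
  have hfo' : ContDiffOn ℝ (n+1) f (Set.Icc x₀ x) := hf.contDiffOn
  have hdiff : DifferentiableOn ℝ (iteratedDerivWithin n f (Set.Icc x₀ x)) (Set.Ioo x₀ x) :=
    (hfo'.differentiableOn_iteratedDerivWithin (by exact_mod_cast Nat.lt_succ_self n) hud).mono
      Set.Ioo_subset_Icc_self
  have hlag := taylor_mean_remainder_lagrange (n := n) hx.ne (by rwa [Set.uIcc_of_le hx.le])
    (by rwa [Set.uIcc_of_le hx.le, Set.uIoo_of_le hx.le])
  rw [Set.uIcc_of_le hx.le, Set.uIoo_of_le hx.le] at hlag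
  obtain ⟨x', hx', heq⟩ := hlag
  have htay : taylorWithinEval f n (Set.Icc x₀ x) x₀ x
      = ∑ k ∈ Finset.range (n+1), iteratedDeriv k f x₀ / (k.factorial : ℝ) * y^k := by
    rw [taylor_within_apply]
    refine Finset.sum_congr rfl fun k hk => ?_
    have hf' : ContDiff ℝ ((n+1 : ℕ) : ℕ∞) f := by exact_mod_cast hf
    rw [myIterDW ((Nat.le_of_lt_succ (Finset.mem_range.mp hk)).trans (Nat.le_succ n)) hud hf'
        (Set.left_mem_Icc.mpr hx.le)]
    have : x - x₀ = y := by simp [hxdef]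
    rw [this, smul_eq_mul]
    ring
  rw [← htay, heq]
  have hx'icc : x' ∈ Set.Icc x₀ x := Set.Ioo_subset_Icc_self hx'
  have hf' : ContDiff ℝ ((n+1 : ℕ) : ℕ∞) f := by exact_mod_cast hf
  rw [myIterDW le_rfl hud hf' hx'icc]
  have hxy : x - x₀ = y := by simp [hxdef]
  rw [hxy, abs_div, abs_mul, abs_pow, abs_of_pos hy, Nat.abs_cast]
  gcongr
  exact hb x' hx'icc

lemma taylor_both (n : ℕ) (f : ℝ → ℝ) (x₀ R M : ℝ) (hM : 0 ≤ M) (hR : 0 ≤ R)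
    (hf : ContDiff ℝ (n+1) f)
    (hb : ∀ ζ ∈ Set.Icc (x₀ - R) (x₀ + R), |iteratedDeriv (n+1) f ζ| ≤ M)
    (y : ℝ) (hy : |y| ≤ R) :
    |f (x₀ + y) - ∑ k ∈ Finset.range (n+1), iteratedDeriv k f x₀ / (k.factorial : ℝ) * y^k|
      ≤ M * R^(n+1) / (n+1).factorial := by
  rcases lt_trichotomy y 0 with hneg | rfl0 | hpos
  · -- reflect
    set g : ℝ → ℝ := fun t => f (2*x₀ - t) with hg
    have hgc : ContDiff ℝ (n+1) g := hf.comp (contDiff_const.sub contDiff_id)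
    have hit : ∀ (k : ℕ) (t : ℝ), iteratedDeriv k g t = (-1:ℝ)^k * iteratedDeriv k f (2*x₀ - t) := by
      intro k t
      have hgeq : g = fun t => (fun z => f (2*x₀ + z)) (-t) := by
        funext t; simp [hg, sub_eq_add_neg]
      have h1 : iteratedDeriv k g t = (-1:ℝ)^k • iteratedDeriv k (fun z => f (2*x₀ + z)) (-t) := by
        rw [hgeq]; exact iteratedDeriv_comp_neg k (fun z => f (2*x₀ + z)) t
      rw [h1, iteratedDeriv_comp_const_add]
      simp [smul_eq_mul, sub_eq_add_neg]
    have hb' : ∀ ζ ∈ Set.Icc x₀ (x₀ + -y), |iteratedDeriv (n+1) g ζ| ≤ M := by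
      intro ζ hζ
      rw [hit]
      rw [abs_mul, abs_pow, abs_neg, abs_one, one_pow, one_mul]
      apply hb
      have h1 := abs_le.mp hy
      constructor <;> [skip; skip] <;> simp at hζ ⊢ <;> linarith [hζ.1, hζ.2]
    have := taylor_right n g x₀ M (-y) (by linarith) hgc hb'
    have e1 : g (x₀ + -y) = f (x₀ + y) := by simp [hg]; ring_nf
    have e2 : ∑ k ∈ Finset.range (n+1), iteratedDeriv k g x₀ / (k.factorial : ℝ) * (-y)^k
        = ∑ k ∈ Finset.range (n+1), iteratedDeriv k f x₀ / (k.factorial : ℝ) * y^k := by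
      refine Finset.sum_congr rfl fun k _ => ?_
      rw [hit]
      have h2 : (2:ℝ)*x₀ - x₀ = x₀ := by ring
      rw [h2, neg_pow y k]
      have he : ((-1:ℝ))^k * (-1:ℝ)^k = 1 := by
        rw [← pow_add]; exact Even.neg_one_pow ⟨k, rfl⟩
      linear_combination iteratedDeriv k f x₀ / (k.factorial:ℝ) * y^k * he
    rw [e1, e2] at this
    refine this.trans ?_
    gcongr
    · linarith [abs_nonneg y]
    · rw [← abs_neg y] at hy; linarith [le_abs_self (-y)]
  · -- y = 0
    have e : ∑ k ∈ Finset.range (n+1), iteratedDeriv k f x₀ / (k.factorial : ℝ) * (0:ℝ)^k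
        = f x₀ := by
      rw [Finset.sum_eq_single 0]
      · simp
      · intro b _ hb0; simp [zero_pow hb0]
      · simp
    subst rfl0
    rw [add_zero, e, sub_self, abs_zero]
    positivity
  · have hyR : y ≤ R := (le_abs_self y).trans hy
    have hb2 : ∀ ζ ∈ Set.Icc x₀ (x₀ + y), |iteratedDeriv (n+1) f ζ| ≤ M := by
      intro ζ hζ
      exact hb ζ ⟨by linarith [hζ.1], by linarith [hζ.2]⟩
    refine (taylor_right n f x₀ M y hpos hf hb2).trans ?_
    gcongr

theorem derivative_estimate_error_at_point (N : ℕ) (f : ℝ → ℝ) (x₀ h K M : ℝ)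
    (hh : 0 < h) (hK : 0 < K) (hM : 0 < M)
    (hf : ContDiff ℝ (N + 1) f)
    (hbound : ∀ ζ ∈ Set.Icc (x₀ - K * h) (x₀ + K * h), |iteratedDeriv (N + 1) f ζ| ≤ M)
    (hs : Fin (N + 1) → ℝ)  -- offsets h_i = x_i - x₀
    (hsep : ∀ i j, i ≠ j → h ≤ |hs i - hs j|)
    (hbd : ∀ i, |hs i| ≤ K * h)
    (ae : Fin (N + 1) → ℝ)
    (hae : ae = (Matrix.vandermonde hs)⁻¹.mulVec (fun j => f (x₀ + hs j))) :
    ∀ i : Fin (N + 1),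
      |(i : ℕ).factorial * ae i - iteratedDeriv (i : ℕ) f x₀| ≤
        M * K ^ (2 * N + 1 - (i : ℕ)) * h ^ (N + 1 - (i : ℕ)) /
          (N - (i : ℕ)).factorial := by
  intro i
  have hile : (i : ℕ) ≤ N := Nat.lt_succ_iff.mp i.isLt
  have hinj : Function.Injective hs := by
    intro a b hab
    by_contra hne
    have h1 := hsep a b hne
    rw [hab, sub_self, abs_zero] at h1
    linarith
  have hdet : IsUnit (Matrix.vandermonde hs).det :=
    (Matrix.det_vandermonde_ne_zero_iff.mpr hinj).isUnit
  set a : Fin (N+1) → ℝ := fun k => iteratedDeriv (k:ℕ) f x₀ / ((k:ℕ).factorial : ℝ) with hadef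
  set r : Fin (N+1) → ℝ :=
    fun j => f (x₀ + hs j) - ∑ k ∈ Finset.range (N+1),
      iteratedDeriv k f x₀ / (k.factorial : ℝ) * hs j ^ k with hrdef
  have hrbd : ∀ j, |r j| ≤ M * (K*h)^(N+1) / (N+1).factorial := fun j =>
    taylor_both N f x₀ (K*h) M hM.le (by positivity) hf hbound (hs j) (hbd j)
  set p := Lagrange.interpolate Finset.univ hs r with hpdef
  have hvinj : Set.InjOn hs (Finset.univ : Finset (Fin (N+1))) := fun x _ y _ hxy => hinj hxy
  have hdeg : p.degree < ((N+1 : ℕ) : WithBot ℕ) := by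
    have h2 := Lagrange.degree_interpolate_lt (r := r) hvinj
    rw [Finset.card_univ, Fintype.card_fin] at h2
    exact h2
  have hnatdeg : p.natDegree < N+1 := by
    rcases eq_or_ne p 0 with h0 | h0
    · simp [h0]
    · exact (Polynomial.natDegree_lt_iff_degree_lt h0).mpr (by exact_mod_cast hdeg)
  set c : Fin (N+1) → ℝ := fun k => p.coeff k with hcdef
  have hWc : (Matrix.vandermonde hs).mulVec c = r := by
    funext j
    have he : p.eval (hs j) = r j := Lagrange.eval_interpolate_at_node r hvinj (Finset.mem_univ j)
    rw [← he, Polynomial.eval_eq_sum_range' hnatdeg]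
    rw [Matrix.mulVec, dotProduct]
    simp only [Matrix.vandermonde_apply]
    rw [show (∑ k : Fin (N+1), hs j ^ (k:ℕ) * c k)
        = ∑ k ∈ Finset.range (N+1), hs j ^ k * p.coeff k from
      Fin.sum_univ_eq_sum_range (fun m => hs j ^ m * p.coeff m) (N+1)]
    exact Finset.sum_congr rfl fun k _ => mul_comm _ _
  have hcr : c = (Matrix.vandermonde hs)⁻¹.mulVec r := by
    rw [← hWc, Matrix.mulVec_mulVec, Matrix.nonsing_inv_mul _ hdet, Matrix.one_mulVec]
  have haec : ae = a + c := by
    rw [hae]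
    have hfd : (fun j => f (x₀ + hs j)) = (Matrix.vandermonde hs).mulVec a + r := by
      funext j
      rw [Pi.add_apply, hrdef]
      have : (Matrix.vandermonde hs).mulVec a j
          = ∑ k ∈ Finset.range (N+1), iteratedDeriv k f x₀ / (k.factorial : ℝ) * hs j ^ k := by
        rw [Matrix.mulVec, dotProduct]
        simp only [Matrix.vandermonde_apply]
        rw [show (∑ k : Fin (N+1), hs j ^ (k:ℕ) * a k)
            = ∑ k ∈ Finset.range (N+1), hs j ^ k *
                (iteratedDeriv k f x₀ / (k.factorial : ℝ)) from
          Fin.sum_univ_eq_sum_range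
            (fun m => hs j ^ m * (iteratedDeriv m f x₀ / (m.factorial : ℝ))) (N+1)]
        exact Finset.sum_congr rfl fun k _ => mul_comm _ _
      rw [this]
      ring
    rw [hfd, Matrix.mulVec_add, Matrix.mulVec_mulVec, Matrix.nonsing_inv_mul _ hdet,
      Matrix.one_mulVec, hcr]
  have hfaceq : (((i:ℕ).factorial : ℕ) : ℝ) * a i = iteratedDeriv (i:ℕ) f x₀ := by
    rw [hadef]
    field_simp
  rw [haec, Pi.add_apply, mul_add, hfaceq, add_sub_cancel_left]
  -- bound each Lagrange basis coefficient
  have hbasis : ∀ j : Fin (N+1),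
      |(Lagrange.basis Finset.univ hs j).coeff i|
        ≤ (N.choose i) * (K*h)^(N - (i:ℕ)) / h^N := by
    intro j
    have hcard : (Finset.univ.erase j).card = N := by
      rw [Finset.card_erase_of_mem (Finset.mem_univ j), Finset.card_univ, Fintype.card_fin]
      omega
    have hbeq : Lagrange.basis Finset.univ hs j
        = Polynomial.C (∏ k ∈ Finset.univ.erase j, (hs j - hs k)⁻¹)
          * ∏ k ∈ Finset.univ.erase j, (Polynomial.X - Polynomial.C (hs k)) := by
      rw [Lagrange.basis]
      simp_rw [Lagrange.basisDivisor]
      rw [Finset.prod_mul_distrib, map_prod]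
    have hQc : (∏ k ∈ Finset.univ.erase j, (Polynomial.X - Polynomial.C (hs k))).coeff i
        = (-1:ℝ)^(N - (i:ℕ)) * ((Finset.univ.erase j).val.map hs).esymm (N - (i:ℕ)) := by
      have hcm : Multiset.card ((Finset.univ.erase j).val.map hs) = N := by
        rw [Multiset.card_map]; exact hcard
      have h3 := Multiset.prod_X_sub_C_coeff ((Finset.univ.erase j).val.map hs)
        (k := (i:ℕ)) (by rw [hcm]; exact hile)
      rw [hcm] at h3
      rw [← h3]
      congr 1
      rw [Multiset.map_map]
      rfl
    have hesymm : |((Finset.univ.erase j).val.map hs).esymm (N - (i:ℕ))|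
        ≤ (N.choose i) * (K*h)^(N - (i:ℕ)) := by
      rw [Finset.esymm_map_val]
      refine (Finset.abs_sum_le_sum_abs _ _).trans ?_
      have hb2 : ∀ t ∈ (Finset.univ.erase j).powersetCard (N - (i:ℕ)),
          |∏ k ∈ t, hs k| ≤ (K*h)^(N - (i:ℕ)) := by
        intro t ht
        rw [Finset.abs_prod]
        have hct : t.card = N - (i:ℕ) := (Finset.mem_powersetCard.mp ht).2
        calc ∏ k ∈ t, |hs k| ≤ ∏ _k ∈ t, (K*h) :=
              Finset.prod_le_prod (fun _ _ => abs_nonneg _) (fun k _ => hbd k)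
          _ = (K*h)^(N - (i:ℕ)) := by rw [Finset.prod_const, hct]
      refine (Finset.sum_le_sum hb2).trans ?_
      rw [Finset.sum_const, Finset.card_powersetCard, hcard, nsmul_eq_mul,
        Nat.choose_symm hile]
    have hprod : h^N ≤ |∏ k ∈ Finset.univ.erase j, (hs j - hs k)| := by
      rw [Finset.abs_prod]
      calc h^N = ∏ _k ∈ Finset.univ.erase j, h := by rw [Finset.prod_const, hcard]
        _ ≤ ∏ k ∈ Finset.univ.erase j, |hs j - hs k| :=
          Finset.prod_le_prod (fun _ _ => hh.le)
            (fun k hk => hsep j k (Ne.symm (Finset.mem_erase.mp hk).1))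
    rw [hbeq, Polynomial.coeff_C_mul, hQc]
    rw [abs_mul, abs_mul, abs_pow, abs_neg, abs_one, one_pow, one_mul]
    rw [Finset.prod_inv_distrib, abs_inv]
    calc |∏ k ∈ Finset.univ.erase j, (hs j - hs k)|⁻¹
          * |((Finset.univ.erase j).val.map hs).esymm (N - (i:ℕ))|
        ≤ (h^N)⁻¹ * ((N.choose i) * (K*h)^(N - (i:ℕ))) := by
          apply mul_le_mul ?_ hesymm (abs_nonneg _) (by positivity)
          exact inv_anti₀ (by positivity) hprod
      _ = (N.choose i) * (K*h)^(N - (i:ℕ)) / h^N := by ring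
  have hcoeff : c i = ∑ j : Fin (N+1), r j * (Lagrange.basis Finset.univ hs j).coeff i := by
    show p.coeff i = _
    rw [hpdef, Lagrange.interpolate_apply, Polynomial.finset_sum_coeff]
    exact Finset.sum_congr rfl fun j _ => by rw [Polynomial.coeff_C_mul]
  have hci : |c i| ≤ (N+1) * ((M * (K*h)^(N+1) / (N+1).factorial)
      * ((N.choose i) * (K*h)^(N - (i:ℕ)) / h^N)) := by
    rw [hcoeff]
    refine (Finset.abs_sum_le_sum_abs _ _).trans ?_
    have hterm : ∀ j : Fin (N+1), |r j * (Lagrange.basis Finset.univ hs j).coeff i|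
        ≤ (M * (K*h)^(N+1) / (N+1).factorial) * ((N.choose i) * (K*h)^(N - (i:ℕ)) / h^N) := by
      intro j
      rw [abs_mul]
      exact mul_le_mul (hrbd j) (hbasis j) (abs_nonneg _) (by positivity)
    refine (Finset.sum_le_sum fun j _ => hterm j).trans ?_
    rw [Finset.sum_const, Finset.card_univ, Fintype.card_fin, nsmul_eq_mul]
    push_cast
    ring_nf
    exact le_refl _
  rw [abs_mul, Nat.abs_cast]
  refine le_trans (mul_le_mul_of_nonneg_left hci (Nat.cast_nonneg _)) (le_of_eq ?_)
  obtain ⟨d, hd⟩ : ∃ d, N = (i:ℕ) + d := ⟨N - i, by omega⟩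
  have e1 : N - (i:ℕ) = d := by omega
  have e2 : N + 1 - (i:ℕ) = d + 1 := by omega
  have e3 : 2*N + 1 - (i:ℕ) = N + d + 1 := by omega
  rw [e1, e2, e3]
  have hfact := Nat.choose_mul_factorial_mul_factorial hile
  rw [e1] at hfact
  have hfactR : ((N.choose i : ℕ) : ℝ) * (i:ℕ).factorial * d.factorial = N.factorial := by
    exact_mod_cast congrArg (Nat.cast : ℕ → ℝ) hfact
  have hfs : (((N+1).factorial : ℕ) : ℝ) = (N+1) * N.factorial := by
    exact_mod_cast congrArg (Nat.cast : ℕ → ℝ) (Nat.factorial_succ N)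
  have hchoose : ((N.choose i : ℕ) : ℝ)
      = (N.factorial : ℝ) / (((i:ℕ).factorial : ℝ) * (d.factorial : ℝ)) := by
    rw [eq_div_iff (by positivity)]
    linarith [hfactR]
  rw [hfs, hchoose]
  have hKN : (K*h)^(N+1) = K^(N+1) * h^(N+1) := mul_pow _ _ _
  have hKd : (K*h)^d = K^d * h^d := mul_pow _ _ _
  rw [hKN, hKd]
  have hexp : K^(N+1) * K^d = K^(N+d+1) := by rw [← pow_add]; ring_nf
  have hexph : h^(N+1) * h^d = h^(N+d+1) := by rw [← pow_add]; ring_nf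
  field_simp
  ring
end
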